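/- Let N, M be natural numbers and let ψ : (Fin N → Fin 2) → ℂ be a normalized N-qubit state such that every multi-index j in the support of ψ has at most M coordinates equal to 1 (card {i : j i = 1} ≤ M). Then ∑_{i ∈ Fin N} λ_max(ρ⁽ⁱ⁾(ψ)) ≥ N − M, where λ_max(ρ⁽ⁱ⁾(ψ)) is the largest eigenvalue of the i-th one-qubit reduced density matrix. -/

import Mathlib

open scoped BigOperators

/-- The `i`-th one-qubit reduced density matrix of an `N`-qubit state. -/
noncomputable def qrdm {N : ℕ} (ψ : (Fin N → Fin 2) → ℂ) (i : Fin N) :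
    Matrix (Fin 2) (Fin 2) ℂ :=
  fun k l => ∑ j : Fin N → Fin 2,
    if j i = k then ψ j * (starRingEnd ℂ) (ψ (Function.update j i l)) else 0

/-- The largest real eigenvalue of a (Hermitian) complex matrix. -/
noncomputable def lmax {n : ℕ} (M : Matrix (Fin n) (Fin n) ℂ) : ℝ :=
  sSup {r : ℝ | Module.End.HasEigenvalue (Matrix.mulVecLin M) ((r : ℂ))}

lemma rcOfReal (r : ℝ) : (RCLike.ofReal r : ℂ) = Complex.ofReal r := rfl

/-- Each diagonal entry of a Hermitian matrix is at most the largest eigenvalue. -/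
theorem diag_re_le_lmax {n : ℕ} {A : Matrix (Fin n) (Fin n) ℂ} (hA : A.IsHermitian) (k : Fin n) :
    (A k k).re ≤ sSup {r : ℝ | Module.End.HasEigenvalue (Matrix.mulVecLin A) ((r : ℂ))} := by
  set S := {r : ℝ | Module.End.HasEigenvalue (Matrix.mulVecLin A) ((r : ℂ))} with hS
  have hbdd : BddAbove S := by
    refine ⟨∑ p : Fin n, ∑ q : Fin n, ‖A p q‖, ?_⟩
    rintro r hr
    obtain ⟨m, hm⟩ := eigenvalue_mem_ball (A := A) hr
    rw [Metric.mem_closedBall, dist_eq_norm] at hm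
    have h1 : r ≤ ‖(r : ℂ)‖ := by
      show r ≤ ‖(r : ℂ)‖
      exact (le_abs_self r).trans (by simpa using Complex.abs_re_le_norm (r : ℂ))
    have h2 := norm_sub_norm_le (r : ℂ) (A m m)
    calc r ≤ ‖(r : ℂ)‖ := h1
      _ ≤ ‖A m m‖ + ∑ j ∈ Finset.univ.erase m, ‖A m j‖ := by linarith
      _ = ∑ j : Fin n, ‖A m j‖ :=
            Finset.add_sum_erase Finset.univ (fun j => ‖A m j‖) (Finset.mem_univ m)
      _ ≤ ∑ p : Fin n, ∑ q : Fin n, ‖A p q‖ := by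
            exact Finset.single_le_sum (fun p _ => Finset.sum_nonneg fun q _ => norm_nonneg _)
              (Finset.mem_univ m)
  have hmem : ∀ j : Fin n, hA.eigenvalues j ∈ S := by
    intro j
    refine Module.End.hasEigenvalue_of_hasEigenvector (x := ⇑(hA.eigenvectorBasis j)) ⟨?_, ?_⟩
    · rw [Module.End.mem_eigenspace_iff]
      have h := hA.mulVec_eigenvectorBasis j
      have : Matrix.mulVecLin A ⇑(hA.eigenvectorBasis j) = A.mulVec ⇑(hA.eigenvectorBasis j) := rfl
      rw [this, h, RCLike.real_smul_eq_coe_smul (K := ℂ)]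
      rfl
    · intro h
      exact (hA.eigenvectorBasis).orthonormal.ne_zero j (by ext p; exact congrFun h p)
  have hdecomp : (A k k).re = ∑ j : Fin n, hA.eigenvalues j * Complex.normSq (hA.eigenvectorUnitary k j) := by
    conv_lhs => rw [hA.spectral_theorem, Unitary.conjStarAlgAut_apply]
    rw [Matrix.mul_apply]
    rw [Complex.re_sum]
    apply Finset.sum_congr rfl
    intro j _
    rw [Matrix.mul_apply]
    simp only [Matrix.diagonal_apply, mul_ite, mul_zero, Finset.sum_ite_eq', Finset.mem_univ,
      if_true, Function.comp_apply]
    rw [rcOfReal, Matrix.star_apply, Complex.star_def]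
    set z := (hA.eigenvectorUnitary : Matrix (Fin n) (Fin n) ℂ) k j with hz
    have hzz : z * (Complex.ofReal (hA.eigenvalues j)) * (starRingEnd ℂ) z
        = Complex.ofReal (hA.eigenvalues j) * (z * (starRingEnd ℂ) z) := by ring
    rw [hzz, Complex.mul_conj, ← Complex.ofReal_mul, Complex.ofReal_re]
  have hweights : ∑ j : Fin n, Complex.normSq ((hA.eigenvectorUnitary : Matrix (Fin n) (Fin n) ℂ) k j) = 1 := by
    have h := Matrix.mem_unitaryGroup_iff.mp (hA.eigenvectorUnitary).2
    have h2 := congrFun (congrFun h k) k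
    rw [Matrix.mul_apply] at h2
    have h3 : ∀ j, (hA.eigenvectorUnitary : Matrix (Fin n) (Fin n) ℂ) k j *
        (star (hA.eigenvectorUnitary : Matrix (Fin n) (Fin n) ℂ)) j k
        = (Complex.normSq ((hA.eigenvectorUnitary : Matrix (Fin n) (Fin n) ℂ) k j) : ℂ) := by
      intro j
      rw [Matrix.star_apply, Complex.star_def, Complex.mul_conj]
    rw [Finset.sum_congr rfl (fun j _ => h3 j)] at h2
    have := congrArg Complex.re h2
    simpa [Complex.re_sum] using this
  rw [hdecomp]
  calc ∑ j : Fin n, hA.eigenvalues j * Complex.normSq (hA.eigenvectorUnitary k j)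
      ≤ ∑ j : Fin n, sSup S * Complex.normSq (hA.eigenvectorUnitary k j) := by
        refine Finset.sum_le_sum fun j _ => ?_
        exact mul_le_mul_of_nonneg_right (le_csSup hbdd (hmem j)) (Complex.normSq_nonneg _)
    _ = sSup S := by rw [← Finset.mul_sum, hweights, mul_one]

lemma qrdm_isHermitian {N : ℕ} (ψ : (Fin N → Fin 2) → ℂ) (i : Fin N) :
    (qrdm ψ i).IsHermitian := by
  refine Matrix.IsHermitian.ext fun k l => ?_
  show (starRingEnd ℂ) (qrdm ψ i l k) = qrdm ψ i k l
  unfold qrdm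
  rw [map_sum]
  have hinv : Function.Involutive (fun j : Fin N → Fin 2 =>
      Function.update j i (Equiv.swap k l (j i))) := by
    intro j
    simp only [Function.update_self, Function.update_idem, Equiv.swap_apply_self,
      Function.update_eq_self]
  rw [← Equiv.sum_comp hinv.toPerm
    (fun j => (starRingEnd ℂ) (if j i = l then ψ j * (starRingEnd ℂ) (ψ (Function.update j i k)) else 0))]
  refine Finset.sum_congr rfl fun j _ => ?_
  simp only [Function.Involutive.coe_toPerm]
  by_cases h : j i = k
  · have he : Function.update j i (Equiv.swap k l (j i)) = Function.update j i l := by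
      rw [h, Equiv.swap_apply_left]
    simp only [he]
    have h1 : Function.update j i l i = l := Function.update_self i l j
    rw [if_pos h1, if_pos h, map_mul, RingHomCompTriple.comp_apply, Function.update_idem]
    have h2 : Function.update j i k = j := by rw [← h]; exact Function.update_eq_self i j
    rw [h2, mul_comm]
    rfl
  · have h1 : Function.update j i (Equiv.swap k l (j i)) i = l ↔ False := by
      simp only [Function.update_self, iff_false]
      intro hc
      apply h
      have := congrArg (Equiv.swap k l) hc
      rwa [Equiv.swap_apply_self, Equiv.swap_apply_right] at this
    simp only [h1, ↓reduceIte, if_neg h, map_zero]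

/-- For a normalized `N`-qubit state supported on multi-indices with at most `M`
ones, the sum of the maximal local eigenvalues is at least `N − M`. -/
theorem sum_lmax_ge_of_support_weight_le (N M : ℕ) (ψ : (Fin N → Fin 2) → ℂ)
    (hnorm : ∑ j : Fin N → Fin 2, ‖ψ j‖ ^ 2 = 1)
    (hsupp : ∀ j : Fin N → Fin 2, ψ j ≠ 0 →
      (Finset.univ.filter fun i => j i = 1).card ≤ M) :
    (N : ℝ) - M ≤ ∑ i : Fin N, lmax (qrdm ψ i) := by
  have hlb : ∀ i : Fin N, ((qrdm ψ i) 0 0).re ≤ lmax (qrdm ψ i) := fun i =>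
    diag_re_le_lmax (qrdm_isHermitian ψ i) 0
  have h00 : ∀ i : Fin N, ((qrdm ψ i) 0 0).re
      = ∑ j : Fin N → Fin 2, if j i = 0 then ‖ψ j‖ ^ 2 else 0 := by
    intro i
    unfold qrdm
    rw [Complex.re_sum]
    refine Finset.sum_congr rfl fun j _ => ?_
    by_cases h : j i = 0
    · rw [if_pos h, if_pos h]
      have h2 : Function.update j i 0 = j := by rw [← h]; exact Function.update_eq_self i j
      rw [h2, Complex.mul_conj]
      simp [Complex.sq_norm]
    · rw [if_neg h, if_neg h]; rfl
  have key : (N : ℝ) - M ≤ ∑ i : Fin N, ((qrdm ψ i) 0 0).re := by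
    have hswap : ∑ i : Fin N, ((qrdm ψ i) 0 0).re
        = ∑ j : Fin N → Fin 2, ‖ψ j‖ ^ 2
            * ((Finset.univ.filter fun i => j i = 0).card : ℝ) := by
      rw [Finset.sum_congr rfl fun i _ => h00 i, Finset.sum_comm]
      refine Finset.sum_congr rfl fun j _ => ?_
      rw [← Finset.sum_filter, Finset.sum_const, nsmul_eq_mul, mul_comm]
    rw [hswap]
    have hcard : ∀ j : Fin N → Fin 2,
        (Finset.univ.filter fun i => j i = 0).card
          + (Finset.univ.filter fun i => j i = 1).card = N := by
      intro j
      rw [show (Finset.univ.filter fun i => j i = 1)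
          = (Finset.univ.filter fun i => ¬ j i = 0) from Finset.filter_congr fun i _ => by
            revert i; intro i
            have : ∀ x : Fin 2, (x = 1 ↔ ¬ x = 0) := by decide
            exact fun _ => this (j i)]
      rw [Finset.card_filter_add_card_filter_not]
      simp
    calc (N : ℝ) - M = ∑ j : Fin N → Fin 2, ‖ψ j‖ ^ 2 * ((N : ℝ) - M) := by
          rw [← Finset.sum_mul, hnorm, one_mul]
      _ ≤ ∑ j : Fin N → Fin 2, ‖ψ j‖ ^ 2
            * ((Finset.univ.filter fun i => j i = 0).card : ℝ) := by
          refine Finset.sum_le_sum fun j _ => ?_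
          by_cases hj : ψ j = 0
          · simp [hj]
          · refine mul_le_mul_of_nonneg_left ?_ (by positivity)
            have h1 := hsupp j hj
            have h2 := hcard j
            have h3 : (M:ℝ) ≥ ((Finset.univ.filter fun i => j i = 1).card : ℝ) := by
              exact_mod_cast h1
            have h4 : ((Finset.univ.filter fun i => j i = 0).card : ℝ)
                + ((Finset.univ.filter fun i => j i = 1).card : ℝ) = N := by exact_mod_cast h2
            linarith
  calc (N : ℝ) - M ≤ ∑ i : Fin N, ((qrdm ψ i) 0 0).re := key
    _ ≤ ∑ i : Fin N, lmax (qrdm ψ i) := Finset.sum_le_sum fun i _ => hlb i
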